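/- Let T be a compactly generated triangulated category with small coproducts and let L be a localizing subcategory of T whose inclusion functor ι : L → T admits a right adjoint ι^R. Assume that (i) an object of L is compact in L if and only if its image under ι is compact in T (i.e. L^c = L ∩ T^c), and (ii) the family of all compact objects of L satisfies (G1) in L. Then ι^R commutes with small coproducts; that is, L is a smashing subcategory of T. -/

import Mathlib

open CategoryTheory CategoryTheory.Limits CategoryTheory.Pretriangulated DirectSum

universe v u u'

namespace Paper1

/-- An object `C` of a category with small coproducts is *compact* if for every small
family `{Xᵢ}` the canonical map `⊕ᵢ Hom(C, Xᵢ) → Hom(C, ∐ᵢ Xᵢ)` is bijective. -/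
def IsCompactObj {T : Type u} [Category.{v} T] [Preadditive T] [HasCoproducts.{v} T]
    (C : T) : Prop :=
  ∀ (ι : Type v) (X : ι → T),
    letI := Classical.decEq ι
    Function.Bijective
      (⇑(DirectSum.toAddMonoid (fun i => Preadditive.rightComp C (Sigma.ι X i)) :
        (⨁ i, (C ⟶ X i)) →+ (C ⟶ ∐ X)))

/-- A family `S` of objects satisfies condition (G1) if every object `X` such that
`Hom(S i, X⟦j⟧) = 0` for all `i` and all `j : ℤ` is a zero object. -/
def SatisfiesG1 {T : Type u} [Category.{v} T] [Preadditive T] [HasShift T ℤ]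
    {κ : Type*} (S : κ → T) : Prop :=
  ∀ X : T, (∀ (i : κ) (j : ℤ) (f : S i ⟶ (X⟦j⟧)), f = 0) → IsZero X

section Helpers

/-- Componentwise additive equivalences induce a bijective map of direct sums. -/
theorem ds_congr_bijective {I : Type*} [DecidableEq I] {A B : I → Type*}
    [∀ i, AddCommMonoid (A i)] [∀ i, AddCommMonoid (B i)] (e : ∀ i, A i ≃+ B i) :
    Function.Bijective
      ⇑(DirectSum.toAddMonoid (fun i => (DirectSum.of B i).comp (e i).toAddMonoidHom)) := by
  set f := DirectSum.toAddMonoid (fun i => (DirectSum.of B i).comp (e i).toAddMonoidHom) with hf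
  set g := DirectSum.toAddMonoid
    (fun i => (DirectSum.of A i).comp (e i).symm.toAddMonoidHom) with hg
  have hgf : ∀ x, g (f x) = x := by
    suffices h : g.comp f = AddMonoidHom.id _ by
      intro x
      exact DFunLike.congr_fun h x
    refine DirectSum.addHom_ext fun i x => ?_
    simp [hf, hg, DirectSum.toAddMonoid_of]
  have hfg : ∀ x, f (g x) = x := by
    suffices h : f.comp g = AddMonoidHom.id _ by
      intro x
      exact DFunLike.congr_fun h x
    refine DirectSum.addHom_ext fun i x => ?_
    simp [hf, hg, DirectSum.toAddMonoid_of]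
  exact ⟨Function.LeftInverse.injective hgf, Function.RightInverse.surjective hfg⟩

@[simp] lemma rightComp_app {C : Type*} [Category C] [Preadditive C] (P : C) {Q R : C}
    (g : Q ⟶ R) (f : P ⟶ Q) : Preadditive.rightComp P g f = f ≫ g := rfl

variable {C : Type*} {D : Type*} [Category.{v} C] [Category.{v} D]

/-- `homEquiv` as an additive equivalence, when the right adjoint is additive. -/
def homAddEquivOfRightAdditive [Preadditive C] [Preadditive D] {F : C ⥤ D} {G : D ⥤ C}
    [G.Additive] (adj : F ⊣ G) (X : C) (Y : D) : (F.obj X ⟶ Y) ≃+ (X ⟶ G.obj Y) :=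
  AddEquiv.mk' (adj.homEquiv X Y) (fun f g => by
    simp [Adjunction.homEquiv_unit, Functor.map_add, Preadditive.comp_add])

@[simp] lemma homAddEquivOfRightAdditive_apply [Preadditive C] [Preadditive D]
    {F : C ⥤ D} {G : D ⥤ C} [G.Additive] (adj : F ⊣ G) (X : C) (Y : D) (f : F.obj X ⟶ Y) :
    homAddEquivOfRightAdditive adj X Y f = adj.homEquiv X Y f := rfl

/-- `homEquiv` as an additive equivalence, when the left adjoint is additive. -/
def homAddEquivOfLeftAdditive [Preadditive C] [Preadditive D] {F : C ⥤ D} {G : D ⥤ C}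
    [F.Additive] (adj : F ⊣ G) (X : C) (Y : D) : (F.obj X ⟶ Y) ≃+ (X ⟶ G.obj Y) :=
  (AddEquiv.mk' (adj.homEquiv X Y).symm (fun f g => by
    simp [Adjunction.homEquiv_counit, Functor.map_add, Preadditive.add_comp])).symm

@[simp] lemma homAddEquivOfLeftAdditive_apply [Preadditive C] [Preadditive D]
    {F : C ⥤ D} {G : D ⥤ C} [F.Additive] (adj : F ⊣ G) (X : C) (Y : D) (f : F.obj X ⟶ Y) :
    homAddEquivOfLeftAdditive adj X Y f = adj.homEquiv X Y f := rfl

@[simp] lemma homAddEquivOfLeftAdditive_symm_apply [Preadditive C] [Preadditive D]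
    {F : C ⥤ D} {G : D ⥤ C} [F.Additive] (adj : F ⊣ G) (X : C) (Y : D) (f : X ⟶ G.obj Y) :
    (homAddEquivOfLeftAdditive adj X Y).symm f = (adj.homEquiv X Y).symm f := rfl

/-- Transport of bijectivity of post-composition across an adjunction. -/
theorem bij_rightComp_of_adjunction {F : C ⥤ D} {G : D ⥤ C} (adj : F ⊣ G)
    (P : C) {A B : D} (c : A ⟶ B)
    (h : Function.Bijective (fun g : F.obj P ⟶ A => g ≫ c)) :
    Function.Bijective (fun g : P ⟶ G.obj A => g ≫ G.map c) := by
  have e : (fun g : P ⟶ G.obj A => g ≫ G.map c) =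
      (adj.homEquiv P B) ∘ (fun g : F.obj P ⟶ A => g ≫ c) ∘ (adj.homEquiv P A).symm := by
    funext g
    simp [Adjunction.homEquiv_naturality_right]
  rw [e]
  exact ((adj.homEquiv P B).bijective.comp h).comp (adj.homEquiv P A).symm.bijective

/-- Compactness is preserved by (additive) equivalences of categories. -/
theorem isCompactObj_of_equivalence {L : Type u} {L' : Type u'}
    [Category.{v} L] [Category.{v} L'] [Preadditive L] [Preadditive L']
    [HasCoproducts.{v} L] [HasCoproducts.{v} L'] (e : L ≌ L') [e.inverse.Additive]
    (C : L) (hC : IsCompactObj C) : IsCompactObj (e.functor.obj C) := by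
  intro J X
  letI := Classical.decEq J
  have hC' := hC J (fun j => e.inverse.obj (X j))
  set adj := e.toAdjunction with hadj
  set σ : (∐ fun j => e.inverse.obj (X j)) ⟶ e.inverse.obj (∐ X) :=
    sigmaComparison e.inverse X with hσ
  haveI : IsIso σ := by
    rw [hσ]
    infer_instance
  set E := homAddEquivOfRightAdditive adj C (∐ X) with hE
  set fwd : (⨁ i, (e.functor.obj C ⟶ X i)) →+ (⨁ i, (C ⟶ e.inverse.obj (X i))) :=
    DirectSum.toAddMonoid (fun i => (DirectSum.of _ i).comp
      (homAddEquivOfRightAdditive adj C (X i)).toAddMonoidHom) with hfwd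
  have hfwdbij : Function.Bijective ⇑fwd :=
    ds_congr_bijective (fun i => homAddEquivOfRightAdditive adj C (X i))
  set Φ := DirectSum.toAddMonoid
    (fun i => Preadditive.rightComp (e.functor.obj C) (Sigma.ι X i)) with hΦ
  set Φ' := DirectSum.toAddMonoid
    (fun i => Preadditive.rightComp C (Sigma.ι (fun j => e.inverse.obj (X j)) i)) with hΦ'
  have claim : E.toAddMonoidHom.comp Φ = ((Preadditive.rightComp C σ).comp Φ').comp fwd := by
    refine DirectSum.addHom_ext fun i f => ?_
    simp [hfwd, hE, hσ, hΦ, hΦ', DirectSum.toAddMonoid_of, Category.assoc,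
      ι_comp_sigmaComparison, Adjunction.homEquiv_naturality_right]
  have hσbij : Function.Bijective ⇑(Preadditive.rightComp C σ) := by
    constructor
    · intro a b hab
      simp only [rightComp_app] at hab
      simpa using congrArg (fun t => t ≫ inv σ) hab
    · intro b
      exact ⟨b ≫ inv σ, by simp⟩
  have hb : Function.Bijective ((⇑(Preadditive.rightComp C σ) ∘ ⇑Φ') ∘ ⇑fwd) :=
    Function.Bijective.comp (Function.Bijective.comp hσbij hC') hfwdbij
  have hcoe := congrArg
    (fun (t : (⨁ i, (e.functor.obj C ⟶ X i)) →+ (C ⟶ e.inverse.obj (∐ X))) => ⇑t) claim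
  simp only [AddMonoidHom.coe_comp, AddEquiv.coe_toAddMonoidHom] at hcoe
  have hEΦ : Function.Bijective (⇑E ∘ ⇑Φ) := by
    rw [hcoe]
    exact hb
  exact (Function.Bijective.of_comp_iff' E.bijective _).mp hEΦ

end Helpers

/-- Let `T` be a compactly generated triangulated category with small coproducts and let
`L` be a localizing subcategory (modelled as a fully faithful exact functor `ι : L ⥤ T`
preserving small coproducts) whose inclusion admits a right adjoint `ιR`. If the compact
objects of `L` are exactly the objects of `L` which are compact in `T`, and the family of
all compact objects of `L` satisfies (G1) in `L`, then `ιR` commutes with small coproducts,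
i.e. `L` is a smashing subcategory of `T`. -/
theorem statement1 {L : Type u} {T : Type u'} [Category.{v} L] [Category.{v} T]
    [HasZeroObject L] [HasShift L ℤ] [Preadditive L]
    [∀ n : ℤ, (shiftFunctor L n).Additive] [Pretriangulated L]
    [HasZeroObject T] [HasShift T ℤ] [Preadditive T]
    [∀ n : ℤ, (shiftFunctor T n).Additive] [Pretriangulated T]
    [HasCoproducts.{v} L] [HasCoproducts.{v} T]
    -- `T` is compactly generated
    (κ : Type v) (G : κ → T) (hcompact : ∀ s, IsCompactObj (G s)) (hG1 : SatisfiesG1 G)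
    -- the inclusion of the localizing subcategory `L`
    (ι : L ⥤ T) [ι.Full] [ι.Faithful] [ι.CommShift ℤ] [ι.IsTriangulated]
    (hloc : ∀ (J : Type v) (X : J → L),
      IsIso (Sigma.desc (fun j => ι.map (Sigma.ι X j)) :
        (∐ fun j => ι.obj (X j)) ⟶ ι.obj (∐ X)))
    (ιR : T ⥤ L) (adj : ι ⊣ ιR)
    -- (i) `L^c = L ∩ T^c`
    (hc : ∀ X : L, IsCompactObj X ↔ IsCompactObj (ι.obj X))
    -- (ii) the compact objects of `L` satisfy (G1) in `L`
    (hLG1 : ∀ X : L, (∀ (C : L), IsCompactObj C → ∀ (j : ℤ) (f : C ⟶ (X⟦j⟧)), f = 0) →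
      IsZero X) :
    ∀ (J : Type v) (X : J → T),
      IsIso (Sigma.desc (fun j => ιR.map (Sigma.ι X j)) :
        (∐ fun j => ιR.obj (X j)) ⟶ ιR.obj (∐ X)) := by
  intro J X
  letI := Classical.decEq J
  set A : L := ∐ fun j => ιR.obj (X j) with hA
  set c : A ⟶ ιR.obj (∐ X) := Sigma.desc (fun j => ιR.map (Sigma.ι X j)) with hcdef
  -- Step 1: for every compact object `D` of `L`, post-composition with `c` is bijective.
  have core : ∀ (D : L), IsCompactObj D →
      Function.Bijective (fun g : D ⟶ A => g ≫ c) := by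
    intro D hD
    have hDT : IsCompactObj (ι.obj D) := (hc D).1 hD
    have hAbij := hD J (fun j => ιR.obj (X j))
    have hTbij := hDT J X
    set E := homAddEquivOfLeftAdditive adj D (∐ X) with hE
    set fwd : (⨁ i, (D ⟶ ιR.obj (X i))) →+ (⨁ i, (ι.obj D ⟶ X i)) :=
      DirectSum.toAddMonoid (fun i => (DirectSum.of _ i).comp
        (homAddEquivOfLeftAdditive adj D (X i)).symm.toAddMonoidHom) with hfwd
    have hfwdbij : Function.Bijective ⇑fwd :=
      ds_congr_bijective (fun i => (homAddEquivOfLeftAdditive adj D (X i)).symm)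
    set ΦA := DirectSum.toAddMonoid
      (fun i => Preadditive.rightComp D (Sigma.ι (fun j => ιR.obj (X j)) i)) with hΦA
    set ΦT := DirectSum.toAddMonoid
      (fun i => Preadditive.rightComp (ι.obj D) (Sigma.ι X i)) with hΦT
    have claim : (Preadditive.rightComp D c).comp ΦA =
        E.toAddMonoidHom.comp (ΦT.comp fwd) := by
      refine DirectSum.addHom_ext fun i f => ?_
      simp [hfwd, hE, hcdef, hΦA, hΦT, DirectSum.toAddMonoid_of, Category.assoc,
        Adjunction.homEquiv_naturality_right]
    have hcoe := congrArg
      (fun (t : (⨁ i, (D ⟶ ιR.obj (X i))) →+ (D ⟶ ιR.obj (∐ X))) => ⇑t) claim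
    simp only [AddMonoidHom.coe_comp, AddEquiv.coe_toAddMonoidHom] at hcoe
    have hcomp : Function.Bijective (⇑(Preadditive.rightComp D c) ∘ ⇑ΦA) := by
      rw [hcoe]
      exact E.bijective.comp (hTbij.comp hfwdbij)
    exact (Function.Bijective.of_comp_iff _ hAbij).mp hcomp
  -- Step 2: transport Step 1 across shifts.
  have key : ∀ (j : ℤ) (D : L), IsCompactObj D →
      Function.Bijective
        (fun g : D ⟶ ((shiftFunctor L j).obj A) => g ≫ (shiftFunctor L j).map c) := by
    intro j D hD
    haveI h1 : ((shiftEquiv L j).symm.inverse).Additive :=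
      (inferInstance : (shiftFunctor L j).Additive)
    haveI h2 : ((shiftEquiv L j).symm.functor).Additive :=
      (inferInstance : (shiftFunctor L (-j)).Additive)
    have hD' : IsCompactObj ((shiftEquiv L j).symm.functor.obj D) :=
      isCompactObj_of_equivalence (shiftEquiv L j).symm D hD
    have := bij_rightComp_of_adjunction ((shiftEquiv L j).symm.toAdjunction) D c
      (core _ hD')
    exact this
  -- Step 3: complete `c` to a distinguished triangle and show the cone is zero.
  obtain ⟨Z, g, h, hT⟩ := Pretriangulated.distinguished_cocone_triangle c
  have hZ : IsZero Z := by
    refine hLG1 Z ?_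
    intro C hCc j f
    set adjS := (shiftEquiv L j).symm.toAdjunction with hadjS
    haveI h1 : ((shiftEquiv L j).symm.inverse).Additive :=
      (inferInstance : (shiftFunctor L j).Additive)
    haveI h2 : ((shiftEquiv L j).symm.functor).Additive :=
      (inferInstance : (shiftFunctor L (-j)).Additive)
    have hD : IsCompactObj ((shiftEquiv L j).symm.functor.obj C) :=
      isCompactObj_of_equivalence (shiftEquiv L j).symm C hCc
    set f' : (shiftEquiv L j).symm.functor.obj C ⟶ Z := (adjS.homEquiv C Z).symm f with hf'
    have hzero31 : h ≫ (shiftFunctor L (1 : ℤ)).map c = 0 :=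
      Pretriangulated.comp_distTriang_mor_zero₃₁ _ hT
    have h31 : f' ≫ h = 0 := by
      apply (key 1 _ hD).injective
      simp only [Category.assoc, hzero31, comp_zero, zero_comp]
    obtain ⟨w, hw⟩ := Pretriangulated.Triangle.coyoneda_exact₃ _ hT f' h31
    obtain ⟨u, hu⟩ := (core _ hD).surjective w
    have h12 : c ≫ (Pretriangulated.Triangle.mk c g h).mor₂ = 0 := Pretriangulated.comp_distTriang_mor_zero₁₂ _ hT
    have hf'0 : f' = 0 := by
      have hw' : w = u ≫ c := hu.symm
      rw [hw, hw']
      exact (Category.assoc u c (Pretriangulated.Triangle.mk c g h).mor₂).trans (by rw [h12, comp_zero]; rfl)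
    have : f = adjS.homEquiv C Z f' := (Equiv.apply_symm_apply _ f).symm
    rw [this, hf'0, Adjunction.homEquiv_unit]
    simp
    rfl
  have : IsIso c := (Pretriangulated.Triangle.isZero₃_iff_isIso₁ _ hT).1 hZ
  exact this

end Paper1
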